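/- Let α_1, ..., α_m ∈ ℤ^n. The injective homomorphism ℤ^n → ℤ^{n+1}, α ↦ (α, 0), induces an injective homomorphism ℤ^n/ℤ⟨α_2-α_1, ..., α_m-α_1⟩ → ℤ^{n+1}/ℤ⟨(α_1,1), ..., (α_m,1)⟩ which restricts to an isomorphism between the respective torsion submodules. -/

import Mathlib

/-- The map `ℤ^n → ℤ^{n+1} = ℤ^n × ℤ`, `α ↦ (α, 0)`, induces an injective homomorphism
`ℤ^n/ℤ⟨α_2-α_1,…,α_m-α_1⟩ → ℤ^{n+1}/ℤ⟨(α_1,1),…,(α_m,1)⟩` which restricts to an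
isomorphism of the torsion submodules (here there are `m + 1` vectors `α_0,…,α_m`). -/
theorem stmt_1 (n m : ℕ) (α : Fin (m + 1) → (Fin n → ℤ))
    (N₁ : Submodule ℤ (Fin n → ℤ))
    (hN₁ : N₁ = Submodule.span ℤ (Set.range fun j : Fin m => α j.succ - α 0))
    (N₂ : Submodule ℤ ((Fin n → ℤ) × ℤ))
    (hN₂ : N₂ = Submodule.span ℤ (Set.range fun j : Fin (m + 1) => (α j, (1 : ℤ)))) :
    ∃ g : ((Fin n → ℤ) ⧸ N₁) →ₗ[ℤ] (((Fin n → ℤ) × ℤ) ⧸ N₂),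
      Function.Injective g ∧
      (∀ x : Fin n → ℤ,
        g (Submodule.Quotient.mk x) = Submodule.Quotient.mk (x, (0 : ℤ))) ∧
      Submodule.map g (Submodule.torsion ℤ ((Fin n → ℤ) ⧸ N₁)) =
        Submodule.torsion ℤ (((Fin n → ℤ) × ℤ) ⧸ N₂) := by
  have hgen : ∀ j : Fin (m + 1), ((α j, (1 : ℤ)) : (Fin n → ℤ) × ℤ) ∈ N₂ := by
    intro j; rw [hN₂]; exact Submodule.subset_span ⟨j, rfl⟩
  -- forward inclusion: x ∈ N₁ → (x,0) ∈ N₂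
  have hfwd : ∀ x ∈ N₁, ((x, (0 : ℤ)) : (Fin n → ℤ) × ℤ) ∈ N₂ := by
    intro x hx
    rw [hN₁] at hx
    induction hx using Submodule.span_induction with
    | mem y hy =>
      obtain ⟨j, rfl⟩ := hy
      have h : ((α j.succ - α 0, (0 : ℤ)) : (Fin n → ℤ) × ℤ)
          = (α j.succ, (1 : ℤ)) - (α 0, (1 : ℤ)) := by simp [Prod.ext_iff]
      rw [h]; exact sub_mem (hgen _) (hgen _)
    | zero => exact N₂.zero_mem
    | add a b _ _ ha hb =>
      have h : ((a + b, (0 : ℤ)) : (Fin n → ℤ) × ℤ) = (a, 0) + (b, 0) := by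
        simp [Prod.ext_iff]
      rw [h]; exact add_mem ha hb
    | smul c a _ ha =>
      have h : ((c • a, (0 : ℤ)) : (Fin n → ℤ) × ℤ) = c • ((a, (0 : ℤ))) := by
        simp [Prod.ext_iff]
      rw [h]; exact N₂.smul_mem c ha
  set f : (Fin n → ℤ) →ₗ[ℤ] (Fin n → ℤ) × ℤ := LinearMap.inl ℤ _ ℤ
  -- N₂ ≤ map f N₁ ⊔ span {(α 0, 1)}
  have hdec : N₂ ≤ N₁.map f ⊔ Submodule.span ℤ {((α 0, (1 : ℤ)) : (Fin n → ℤ) × ℤ)} := by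
    rw [hN₂, Submodule.span_le]
    rintro _ ⟨j, rfl⟩
    have h : ((α j, (1 : ℤ)) : (Fin n → ℤ) × ℤ)
        = (α j - α 0, 0) + (α 0, 1) := by simp [Prod.ext_iff]
    show ((α j, (1 : ℤ)) : (Fin n → ℤ) × ℤ) ∈ _
    rw [h]
    refine add_mem (Submodule.mem_sup_left ?_)
      (Submodule.mem_sup_right (Submodule.mem_span_singleton_self _))
    refine ⟨α j - α 0, ?_, rfl⟩
    rw [hN₁]
    rcases Fin.eq_zero_or_eq_succ j with rfl | ⟨k, rfl⟩
    · simp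
    · exact Submodule.subset_span ⟨k, rfl⟩
  -- backward: (x,0) ∈ N₂ → x ∈ N₁
  have hbwd : ∀ x : Fin n → ℤ, ((x, (0 : ℤ)) : (Fin n → ℤ) × ℤ) ∈ N₂ → x ∈ N₁ := by
    intro x hx
    obtain ⟨y, hy, z, hz, hyz⟩ := Submodule.mem_sup.mp (hdec hx)
    obtain ⟨w, hw, rfl⟩ := hy
    obtain ⟨c, rfl⟩ := Submodule.mem_span_singleton.mp hz
    have h2 : (0 : ℤ) = c := by
      have := congrArg Prod.snd hyz
      simpa [f] using this.symm
    subst h2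
    have h1 := congrArg Prod.fst hyz
    simp [f] at h1
    rwa [← h1]
  have hker : N₁ ≤ LinearMap.ker ((N₂.mkQ).comp f) := by
    intro x hx
    simp only [LinearMap.mem_ker, LinearMap.comp_apply, Submodule.mkQ_apply, f,
      LinearMap.inl_apply, Submodule.Quotient.mk_eq_zero]
    exact hfwd x hx
  refine ⟨N₁.liftQ ((N₂.mkQ).comp f) hker, ?_, ?_, ?_⟩
  case refine_2 => intro x; rfl
  case refine_1 =>
    rw [← LinearMap.ker_eq_bot]
    rw [Submodule.ker_liftQ, Submodule.eq_bot_iff]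
    intro q hq
    obtain ⟨x, rfl⟩ := N₁.mkQ_surjective q
    simp only [Submodule.mem_map, Submodule.mkQ_apply] at hq
    obtain ⟨y, hy, hxy⟩ := hq
    simp only [LinearMap.mem_ker, LinearMap.comp_apply, Submodule.mkQ_apply, f,
      LinearMap.inl_apply, Submodule.Quotient.mk_eq_zero] at hy
    rw [Submodule.mkQ_apply, Submodule.Quotient.mk_eq_zero]
    rw [Submodule.Quotient.eq] at hxy
    simpa using N₁.sub_mem (hbwd y hy) hxy
  case refine_3 =>
    set g := N₁.liftQ ((N₂.mkQ).comp f) hker with hg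
    have hginj : Function.Injective g := by
      rw [← LinearMap.ker_eq_bot, hg, Submodule.ker_liftQ, Submodule.eq_bot_iff]
      intro q hq
      obtain ⟨x, rfl⟩ := N₁.mkQ_surjective q
      simp only [Submodule.mem_map, Submodule.mkQ_apply] at hq
      obtain ⟨y, hy, hxy⟩ := hq
      simp only [LinearMap.mem_ker, LinearMap.comp_apply, Submodule.mkQ_apply, f,
        LinearMap.inl_apply, Submodule.Quotient.mk_eq_zero] at hy
      rw [Submodule.mkQ_apply, Submodule.Quotient.mk_eq_zero]
      rw [Submodule.Quotient.eq] at hxy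
      simpa using N₁.sub_mem (hbwd y hy) hxy
    have hsurj : Function.Surjective g := by
      intro q
      obtain ⟨⟨x, t⟩, rfl⟩ := N₂.mkQ_surjective q
      refine ⟨Submodule.Quotient.mk (x - t • α 0), ?_⟩
      show Submodule.Quotient.mk ((x - t • α 0 : Fin n → ℤ), (0 : ℤ)) = _
      rw [Submodule.mkQ_apply, Submodule.Quotient.eq]
      have h : (((x - t • α 0 : Fin n → ℤ), (0 : ℤ)) : (Fin n → ℤ) × ℤ) - (x, t)
          = (-t) • ((α 0, (1 : ℤ))) := by
        simp [Prod.ext_iff]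
      rw [h]
      exact N₂.smul_mem _ (hgen 0)
    ext q
    simp only [Submodule.mem_map]
    constructor
    · rintro ⟨y, hy, rfl⟩
      obtain ⟨c, hc⟩ := hy
      refine ⟨c, ?_⟩
      rw [Submonoid.smul_def] at hc ⊢
      rw [← map_smul, hc, map_zero]
    · intro hq
      obtain ⟨y, rfl⟩ := hsurj q
      refine ⟨y, ?_, rfl⟩
      obtain ⟨c, hc⟩ := hq
      refine ⟨c, ?_⟩
      apply hginj
      rw [Submonoid.smul_def] at hc ⊢
      rw [map_smul, hc, map_zero]
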